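/- Let L be an n × N matrix over F. If C(L) contains a nonzero codeword c of Hamming weight w, then there exist a set X_A ⊆ {1,…,n} with |X_A| = w − 1 and an index j ∈ {1,…,n}∖X_A such that an adversary owning {x_ℓ}_{ℓ∈X_A} and observing xL can determine x_j; that is, for all x, x' ∈ F^n with xL = x'L and x_ℓ = x'_ℓ for all ℓ ∈ X_A, one has x_j = x'_j. In particular, if C(L) has minimum distance d, the index code based on L is not weakly secure against at least one adversary of strength d − 1. -/

import Mathlib

/-- If `C(L)` contains a nonzero codeword `c` of Hamming weight `w`, then there
is a side-information set `X_A` of size `w - 1` and an index `j ∉ X_A` such that an adversary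
owning `x_{X_A}` and observing `x * L` can determine `x_j`; in particular the code is not
weakly secure against at least one adversary of strength `d - 1`, `d` the minimum distance. -/
theorem stmt_8 {F : Type} [Field F] {n N : ℕ}
    (L : Matrix (Fin n) (Fin N) F) (c : Fin n → F)
    (hc : c ∈ Submodule.span F (Set.range fun j : Fin N => fun r : Fin n => L r j))
    (hc0 : c ≠ 0) (w : ℕ) (hw : Set.ncard (Function.support c) = w) :
    ∃ XA : Set (Fin n), XA.ncard = w - 1 ∧
      ∃ j : Fin n, j ∉ XA ∧
        ∀ x x' : Fin n → F, Matrix.vecMul x L = Matrix.vecMul x' L →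
          (∀ ℓ ∈ XA, x ℓ = x' ℓ) → x j = x' j := by
  obtain ⟨a, ha⟩ := (Submodule.mem_span_range_iff_exists_fun F).mp hc
  obtain ⟨j0, hj0⟩ : ∃ j0, c j0 ≠ 0 := Function.ne_iff.mp hc0
  refine ⟨Function.support c \ {j0}, ?_, j0, by simp, ?_⟩
  · have hmem : j0 ∈ Function.support c := hj0
    rw [Set.ncard_diff_singleton_of_mem hmem, hw]
  · intro x x' hL hXA
    have key : ∀ y : Fin n → F, ∑ r, y r * c r = ∑ j, a j * Matrix.vecMul y L j := by
      intro y
      calc ∑ r, y r * c r = ∑ r, y r * ∑ j, a j * L r j := by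
            refine Finset.sum_congr rfl fun r _ => ?_
            rw [← ha]; simp [Finset.sum_apply, mul_comm]
        _ = ∑ r, ∑ j, a j * (y r * L r j) := by
            simp [Finset.mul_sum, mul_left_comm]
        _ = ∑ j, a j * ∑ r, y r * L r j := by
            rw [Finset.sum_comm]
            simp [Finset.mul_sum]
        _ = ∑ j, a j * Matrix.vecMul y L j := rfl
    have hsum : ∑ r, (x r - x' r) * c r = 0 := by
      simp only [sub_mul, Finset.sum_sub_distrib, key x, key x', hL, sub_self]
    have : (x j0 - x' j0) * c j0 = 0 := by
      rw [← hsum]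
      symm
      apply Finset.sum_eq_single_of_mem j0 (Finset.mem_univ j0)
      intro r _ hr
      by_cases hcr : c r = 0
      · simp [hcr]
      · have := hXA r ⟨hcr, hr⟩
        simp [this]
    exact sub_eq_zero.mp ((mul_eq_zero.mp this).resolve_right hj0)
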